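/- Let U : ℝ^d × P₂(ℝ^d) → ℝ with U, ∂ₓU continuous, and suppose U is Lasry-Lions monotone: E[U(ξ¹, μ¹) + U(ξ², μ²) − U(ξ¹, μ²) − U(ξ², μ¹)] ≥ 0 for all square-integrable ξ¹, ξ² with laws μ¹, μ². If in addition ∂ₓₓU exists and is uniformly bounded by a constant C (in operator norm), then U is displacement λ-monotone for λ = 2C, i.e. E[⟨∂ₓU(ξ¹, μ¹) − ∂ₓU(ξ², μ²), ξ¹ − ξ²⟩ + 2C|ξ¹ − ξ²|²] ≥ 0. -/

import Mathlib

open MeasureTheory ProbabilityTheory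
open scoped RealInnerProductSpace ENNReal

set_option maxHeartbeats 1000000 in
/-- If `U` is Lasry-Lions monotone and `∂ₓₓU` is uniformly bounded by `C`, then `U` is
displacement `λ`-monotone with `λ = 2C`. -/
theorem stmt_1
    {d : ℕ} {Ω : Type*} [MeasureSpace Ω] [IsProbabilityMeasure (ℙ : Measure Ω)]
    (C : ℝ) (hC : 0 ≤ C)
    (U : EuclideanSpace ℝ (Fin d) → ProbabilityMeasure (EuclideanSpace ℝ (Fin d)) → ℝ)
    (DxU : EuclideanSpace ℝ (Fin d) → ProbabilityMeasure (EuclideanSpace ℝ (Fin d)) →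
      EuclideanSpace ℝ (Fin d))
    (DxxU : EuclideanSpace ℝ (Fin d) → ProbabilityMeasure (EuclideanSpace ℝ (Fin d)) →
      (EuclideanSpace ℝ (Fin d) →L[ℝ] EuclideanSpace ℝ (Fin d)))
    (hUcont : Continuous fun q :
      EuclideanSpace ℝ (Fin d) × ProbabilityMeasure (EuclideanSpace ℝ (Fin d)) => U q.1 q.2)
    (hDxUcont : Continuous fun q :
      EuclideanSpace ℝ (Fin d) × ProbabilityMeasure (EuclideanSpace ℝ (Fin d)) => DxU q.1 q.2)
    (hDxU : ∀ (μ : ProbabilityMeasure (EuclideanSpace ℝ (Fin d))) (x : EuclideanSpace ℝ (Fin d)),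
      HasGradientAt (fun y => U y μ) (DxU x μ) x)
    (hDxxU : ∀ (μ : ProbabilityMeasure (EuclideanSpace ℝ (Fin d))) (x : EuclideanSpace ℝ (Fin d)),
      HasFDerivAt (fun y => DxU y μ) (DxxU x μ) x)
    (hDxxUbd : ∀ (x : EuclideanSpace ℝ (Fin d))
      (μ : ProbabilityMeasure (EuclideanSpace ℝ (Fin d))), ‖DxxU x μ‖ ≤ C)
    -- Lasry-Lions monotonicity of `U`
    (hLL : ∀ (ξ₁ ξ₂ : Ω → EuclideanSpace ℝ (Fin d))
      (μ₁ μ₂ : ProbabilityMeasure (EuclideanSpace ℝ (Fin d))),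
      Measurable ξ₁ → Measurable ξ₂ → MemLp ξ₁ 2 ℙ → MemLp ξ₂ 2 ℙ →
      (μ₁ : Measure (EuclideanSpace ℝ (Fin d))) = Measure.map ξ₁ ℙ →
      (μ₂ : Measure (EuclideanSpace ℝ (Fin d))) = Measure.map ξ₂ ℙ →
      0 ≤ ∫ ω, (U (ξ₁ ω) μ₁ + U (ξ₂ ω) μ₂ - U (ξ₁ ω) μ₂ - U (ξ₂ ω) μ₁) ∂ℙ) :
    -- displacement `2C`-monotonicity of `U`
    ∀ (ξ₁ ξ₂ : Ω → EuclideanSpace ℝ (Fin d))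
      (μ₁ μ₂ : ProbabilityMeasure (EuclideanSpace ℝ (Fin d))),
      Measurable ξ₁ → Measurable ξ₂ → MemLp ξ₁ 2 ℙ → MemLp ξ₂ 2 ℙ →
      (μ₁ : Measure (EuclideanSpace ℝ (Fin d))) = Measure.map ξ₁ ℙ →
      (μ₂ : Measure (EuclideanSpace ℝ (Fin d))) = Measure.map ξ₂ ℙ →
      0 ≤ ∫ ω, (⟪DxU (ξ₁ ω) μ₁ - DxU (ξ₂ ω) μ₂, ξ₁ ω - ξ₂ ω⟫
          + 2 * C * ‖ξ₁ ω - ξ₂ ω‖ ^ 2) ∂ℙ := by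
  intro ξ₁ ξ₂ μ₁ μ₂ hm1 hm2 hL1 hL2 hμ1 hμ2
  -- `DxU (· , ν)` is `C`-Lipschitz
  have hlip : ∀ (ν : ProbabilityMeasure (EuclideanSpace ℝ (Fin d)))
      (x y : EuclideanSpace ℝ (Fin d)), ‖DxU x ν - DxU y ν‖ ≤ C * ‖x - y‖ := by
    intro ν x y
    have := convex_univ.norm_image_sub_le_of_norm_hasFDerivWithin_le
      (f := fun z => DxU z ν) (f' := fun z => DxxU z ν)
      (fun z _ => (hDxxU ν z).hasFDerivWithinAt)
      (fun z _ => hDxxUbd z ν) (Set.mem_univ y) (Set.mem_univ x)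
    simpa using this
  -- fundamental theorem of calculus along the segment
  have hFTC : ∀ (ν : ProbabilityMeasure (EuclideanSpace ℝ (Fin d)))
      (x y : EuclideanSpace ℝ (Fin d)),
      U x ν - U y ν = ∫ s in (0:ℝ)..1, ⟪DxU (y + s • (x - y)) ν, x - y⟫ := by
    intro ν x y
    have hcont : Continuous fun s : ℝ => ⟪DxU (y + s • (x - y)) ν, x - y⟫ := by
      apply Continuous.inner _ continuous_const
      exact hDxUcont.comp (Continuous.prodMk (continuous_const.add (continuous_id.smul continuous_const)) continuous_const)
    have hderiv : ∀ s ∈ Set.uIcc (0:ℝ) 1,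
        HasDerivAt (fun s : ℝ => U (y + s • (x - y)) ν)
          (⟪DxU (y + s • (x - y)) ν, x - y⟫) s := by
      intro s _
      have hline : HasDerivAt (fun s : ℝ => y + s • (x - y)) (x - y) s := by
        simpa using ((hasDerivAt_id s).smul_const (x - y)).const_add y
      have hgrad := hasGradientAt_iff_hasFDerivAt.mp (hDxU ν (y + s • (x - y)))
      have := hgrad.comp_hasDerivAt s hline
      simpa [InnerProductSpace.toDual_apply_apply, Function.comp_def] using this
    have := intervalIntegral.integral_eq_sub_of_hasDerivAt hderiv
      (hcont.intervalIntegrable 0 1)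
    rw [this]
    norm_num
  -- key pointwise estimate
  have hkey : ∀ x y : EuclideanSpace ℝ (Fin d),
      |U x μ₁ + U y μ₂ - U x μ₂ - U y μ₁
        - ⟪DxU x μ₁ - DxU y μ₂, x - y⟫| ≤ C * ‖x - y‖ ^ 2 := by
    intro x y
    have hcont1 : Continuous fun s : ℝ => ⟪DxU (y + s • (x - y)) μ₁, x - y⟫ := by
      apply Continuous.inner _ continuous_const
      exact hDxUcont.comp (Continuous.prodMk (continuous_const.add (continuous_id.smul continuous_const)) continuous_const)
    have hcont2 : Continuous fun s : ℝ => ⟪DxU (y + s • (x - y)) μ₂, x - y⟫ := by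
      apply Continuous.inner _ continuous_const
      exact hDxUcont.comp (Continuous.prodMk (continuous_const.add (continuous_id.smul continuous_const)) continuous_const)
    have hrep : U x μ₁ + U y μ₂ - U x μ₂ - U y μ₁
        - ⟪DxU x μ₁ - DxU y μ₂, x - y⟫
        = ∫ s in (0:ℝ)..1,
            (⟪DxU (y + s • (x - y)) μ₁, x - y⟫ - ⟪DxU (y + s • (x - y)) μ₂, x - y⟫
              - ⟪DxU x μ₁ - DxU y μ₂, x - y⟫) := by
      rw [intervalIntegral.integral_sub (f := fun s : ℝ =>
          ⟪DxU (y + s • (x - y)) μ₁, x - y⟫ - ⟪DxU (y + s • (x - y)) μ₂, x - y⟫)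
          ((hcont1.sub hcont2).intervalIntegrable 0 1)
          intervalIntegrable_const,
        intervalIntegral.integral_sub (hcont1.intervalIntegrable 0 1)
          (hcont2.intervalIntegrable 0 1),
        ← hFTC μ₁ x y, ← hFTC μ₂ x y, intervalIntegral.integral_const]
      norm_num
      ring
    rw [hrep, ← Real.norm_eq_abs]
    have hbd := intervalIntegral.norm_integral_le_of_norm_le_const
      (C := C * ‖x - y‖ ^ 2)
      (f := fun s : ℝ => ⟪DxU (y + s • (x - y)) μ₁, x - y⟫
        - ⟪DxU (y + s • (x - y)) μ₂, x - y⟫ - ⟪DxU x μ₁ - DxU y μ₂, x - y⟫)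
      (a := 0) (b := 1) ?_
    · simpa using hbd
    · intro s hs
      rw [Set.uIoc_of_le (by norm_num : (0:ℝ) ≤ 1)] at hs
      obtain ⟨hs0, hs1⟩ := hs
      have e1 : y + s • (x - y) - x = (s - 1) • (x - y) := by
        rw [sub_smul, one_smul]; abel
      have e2 : y + s • (x - y) - y = s • (x - y) := by abel
      have b1 : ‖DxU (y + s • (x - y)) μ₁ - DxU x μ₁‖ ≤ C * ((1 - s) * ‖x - y‖) := by
        calc ‖DxU (y + s • (x - y)) μ₁ - DxU x μ₁‖
            ≤ C * ‖y + s • (x - y) - x‖ := hlip μ₁ _ _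
          _ = C * ((1 - s) * ‖x - y‖) := by
              rw [e1, norm_smul, Real.norm_eq_abs, abs_of_nonpos (by linarith)]
              ring
      have b2 : ‖DxU (y + s • (x - y)) μ₂ - DxU y μ₂‖ ≤ C * (s * ‖x - y‖) := by
        calc ‖DxU (y + s • (x - y)) μ₂ - DxU y μ₂‖
            ≤ C * ‖y + s • (x - y) - y‖ := hlip μ₂ _ _
          _ = C * (s * ‖x - y‖) := by
              rw [e2, norm_smul, Real.norm_eq_abs, abs_of_pos hs0]
      have ha : ⟪DxU (y + s • (x - y)) μ₁, x - y⟫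
          - ⟪DxU (y + s • (x - y)) μ₂, x - y⟫ - ⟪DxU x μ₁ - DxU y μ₂, x - y⟫
          = ⟪DxU (y + s • (x - y)) μ₁ - DxU x μ₁, x - y⟫
            - ⟪DxU (y + s • (x - y)) μ₂ - DxU y μ₂, x - y⟫ := by
        simp [inner_sub_left]; ring
      simp only [Real.norm_eq_abs]
      rw [ha]
      have i1 := abs_real_inner_le_norm (DxU (y + s • (x - y)) μ₁ - DxU x μ₁) (x - y)
      have i2 := abs_real_inner_le_norm (DxU (y + s • (x - y)) μ₂ - DxU y μ₂) (x - y)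
      have tri := abs_sub (⟪DxU (y + s • (x - y)) μ₁ - DxU x μ₁, x - y⟫ : ℝ)
        (⟪DxU (y + s • (x - y)) μ₂ - DxU y μ₂, x - y⟫ : ℝ)
      have hn : (0:ℝ) ≤ ‖x - y‖ := norm_nonneg _
      have key : C * ((1 - s) * ‖x - y‖) * ‖x - y‖ + C * (s * ‖x - y‖) * ‖x - y‖
          = C * ‖x - y‖ ^ 2 := by ring
      nlinarith [mul_le_mul_of_nonneg_right b1 hn, mul_le_mul_of_nonneg_right b2 hn,
        mul_le_mul_of_nonneg_right (le_of_abs_le i1) hn]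
  -- integrability facts
  have hδ : MemLp (fun ω => ξ₁ ω - ξ₂ ω) 2 ℙ := hL1.sub hL2
  have hδsq : Integrable (fun ω => ‖ξ₁ ω - ξ₂ ω‖ ^ 2) ℙ :=
    (memLp_two_iff_integrable_sq_norm hδ.1).mp hδ
  have hDmem : ∀ (ξ : Ω → EuclideanSpace ℝ (Fin d)), Measurable ξ → MemLp ξ 2 ℙ →
      ∀ ν, MemLp (fun ω => DxU (ξ ω) ν) 2 ℙ := by
    intro ξ hmξ hLξ ν
    have hcν : Continuous fun z : EuclideanSpace ℝ (Fin d) => DxU z ν :=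
      hDxUcont.comp (continuous_id.prodMk continuous_const)
    have hmeas : AEStronglyMeasurable (fun ω => DxU (ξ ω) ν) ℙ :=
      (hcν.measurable.comp hmξ).aestronglyMeasurable
    have hbd : MemLp (fun ω => ‖DxU 0 ν‖ + C * ‖ξ ω‖) 2 ℙ :=
      by have h := (memLp_const (μ := ℙ) (p := 2) ‖DxU 0 ν‖).add (hLξ.norm.const_mul C); exact h
    refine hbd.of_le hmeas (Filter.Eventually.of_forall fun ω => ?_)
    have hl := hlip ν (ξ ω) 0
    rw [sub_zero] at hl
    have htri : ‖DxU (ξ ω) ν‖ - ‖DxU 0 ν‖ ≤ ‖DxU (ξ ω) ν - DxU 0 ν‖ :=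
      norm_sub_norm_le _ _
    rw [Real.norm_eq_abs, abs_of_nonneg (by positivity)]
    linarith
  have hA : MemLp (fun ω => DxU (ξ₁ ω) μ₁ - DxU (ξ₂ ω) μ₂) 2 ℙ :=
    (hDmem ξ₁ hm1 hL1 μ₁).sub (hDmem ξ₂ hm2 hL2 μ₂)
  have hAsq : Integrable (fun ω => ‖DxU (ξ₁ ω) μ₁ - DxU (ξ₂ ω) μ₂‖ ^ 2) ℙ :=
    (memLp_two_iff_integrable_sq_norm hA.1).mp hA
  have hinner : Integrable
      (fun ω => (⟪DxU (ξ₁ ω) μ₁ - DxU (ξ₂ ω) μ₂, ξ₁ ω - ξ₂ ω⟫ : ℝ)) ℙ := by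
    refine Integrable.mono' ((hAsq.add hδsq).const_mul (1/2 : ℝ))
      (hA.1.inner hδ.1) (Filter.Eventually.of_forall fun ω => ?_)
    have h1 := abs_real_inner_le_norm (DxU (ξ₁ ω) μ₁ - DxU (ξ₂ ω) μ₂) (ξ₁ ω - ξ₂ ω)
    rw [Real.norm_eq_abs]
    simp only [Pi.add_apply]
    nlinarith [sq_nonneg (‖DxU (ξ₁ ω) μ₁ - DxU (ξ₂ ω) μ₂‖ - ‖ξ₁ ω - ξ₂ ω‖)]
  have htarget : Integrable (fun ω =>
      (⟪DxU (ξ₁ ω) μ₁ - DxU (ξ₂ ω) μ₂, ξ₁ ω - ξ₂ ω⟫ : ℝ)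
        + 2 * C * ‖ξ₁ ω - ξ₂ ω‖ ^ 2) ℙ := by
    have := hinner.add (hδsq.const_mul (2 * C))
    simpa [mul_assoc, Pi.add_def] using this
  -- integrability of the Lasry-Lions integrand
  have hUmeas : ∀ (ξ : Ω → EuclideanSpace ℝ (Fin d)), Measurable ξ →
      ∀ ν, AEStronglyMeasurable (fun ω => U (ξ ω) ν) ℙ := by
    intro ξ hmξ ν
    have hcν : Continuous fun z : EuclideanSpace ℝ (Fin d) => U z ν :=
      hUcont.comp (continuous_id.prodMk continuous_const)
    exact (hcν.measurable.comp hmξ).aestronglyMeasurable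
  have hg : Integrable (fun ω =>
      U (ξ₁ ω) μ₁ + U (ξ₂ ω) μ₂ - U (ξ₁ ω) μ₂ - U (ξ₂ ω) μ₁) ℙ := by
    refine Integrable.mono' (hinner.abs.add (hδsq.const_mul C))
      ((((hUmeas ξ₁ hm1 μ₁).add (hUmeas ξ₂ hm2 μ₂)).sub (hUmeas ξ₁ hm1 μ₂)).sub
        (hUmeas ξ₂ hm2 μ₁)) (Filter.Eventually.of_forall fun ω => ?_)
    have h := hkey (ξ₁ ω) (ξ₂ ω)
    have h2 := abs_le.mp h
    rw [Real.norm_eq_abs]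
    simp only [Pi.add_apply]
    rcases abs_le.mp (le_refl |(⟪DxU (ξ₁ ω) μ₁ - DxU (ξ₂ ω) μ₂, ξ₁ ω - ξ₂ ω⟫ : ℝ)|) with ⟨hi1, hi2⟩
    rw [abs_le]
    constructor <;> linarith
  -- conclusion
  have h0 := hLL ξ₁ ξ₂ μ₁ μ₂ hm1 hm2 hL1 hL2 hμ1 hμ2
  refine le_trans h0 (integral_mono hg htarget fun ω => ?_)
  have h := hkey (ξ₁ ω) (ξ₂ ω)
  have h2 := (abs_le.mp h).2
  have hsq : (0:ℝ) ≤ C * ‖ξ₁ ω - ξ₂ ω‖ ^ 2 := by positivity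
  show U (ξ₁ ω) μ₁ + U (ξ₂ ω) μ₂ - U (ξ₁ ω) μ₂ - U (ξ₂ ω) μ₁
    ≤ ⟪DxU (ξ₁ ω) μ₁ - DxU (ξ₂ ω) μ₂, ξ₁ ω - ξ₂ ω⟫ + 2 * C * ‖ξ₁ ω - ξ₂ ω‖ ^ 2
  linarith
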